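/- Let g be an isometry of a CAT(0) space acting by translation of length L > 0 along an axis A (a geodesic line), and let h be another such isometry with axis B and translation length L, with A ≠ B and A ∩ B a geodesic segment. Then the length of A ∩ B is strictly less than L, provided the group generated by g and h acts freely. -/

import Mathlib

/-- If `g` translates along `γA` by `L` and along `γB` by `ε * L`, and `γA`, `γB` agree
(up to the affine reparametrization `s ↦ ε * s + c`) on an interval of length at least `L`,
then they agree everywhere, so the two axes coincide. -/
lemma axis_ext {X : Type*} [MetricSpace X] (g : X ≃ᵢ X) (L ε c s₀ s₁ : ℝ)
    (hL : 0 < L) (hs : s₀ + L ≤ s₁) (hε : ε * ε = 1)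
    (γA γB : ℝ → X)
    (hgA : ∀ t, g (γA t) = γA (t + L)) (hgB : ∀ t, g (γB t) = γB (t + ε * L))
    (hrel : ∀ s ∈ Set.Icc s₀ s₁, γA s = γB (ε * s + c)) :
    Set.range γA = Set.range γB := by
  have Qup : ∀ s, γA s = γB (ε * s + c) → γA (s + L) = γB (ε * (s + L) + c) := by
    intro s hq
    have h1 := hgA s
    rw [hq, hgB] at h1
    rw [← h1]; congr 1; ring
  have Qdown : ∀ s, γA s = γB (ε * s + c) → γA (s - L) = γB (ε * (s - L) + c) := by
    intro s hq
    apply g.injective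
    rw [hgA, hgB]
    have h2 : s - L + L = s := by ring
    rw [h2, hq]; congr 1; ring
  have Qshift : ∀ n : ℤ, ∀ s, γA s = γB (ε * s + c) →
      γA (s + n * L) = γB (ε * (s + n * L) + c) := by
    intro n
    induction n using Int.induction_on with
    | zero => intro s hq; simpa using hq
    | succ k ih =>
      intro s hq
      have h3 := Qup _ (ih s hq)
      have e1 : s + (((k : ℤ) : ℝ)) * L + L = s + (((k : ℤ) + 1 : ℤ) : ℝ) * L := by
        push_cast; ring
      rw [e1] at h3
      exact h3
    | pred k ih =>
      intro s hq
      have h3 := Qdown _ (ih s hq)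
      have e1 : s + ((-(k : ℤ) : ℤ) : ℝ) * L - L = s + ((-(k : ℤ) - 1 : ℤ) : ℝ) * L := by
        push_cast; ring
      rw [e1] at h3
      exact h3
  have key : ∀ s, γA s = γB (ε * s + c) := by
    intro s
    set n : ℤ := ⌈(s₀ - s) / L⌉ with hn
    have h1 : (s₀ - s) / L ≤ (n : ℝ) := Int.le_ceil _
    have h2 : (n : ℝ) < (s₀ - s) / L + 1 := Int.ceil_lt_add_one _
    have hb1 : s₀ - s ≤ (n : ℝ) * L := by
      have := (div_le_iff₀ hL).mp h1
      linarith
    have hb2 : (n : ℝ) * L < s₀ - s + L := by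
      have h2' := mul_lt_mul_of_pos_right h2 hL
      rw [add_mul, div_mul_cancel₀ _ (ne_of_gt hL), one_mul] at h2'
      exact h2'
    have hm : s + (n : ℝ) * L ∈ Set.Icc s₀ s₁ := ⟨by linarith, by linarith⟩
    have hq := hrel _ hm
    have h3 := Qshift (-n) _ hq
    have e1 : s + (n : ℝ) * L + ((-n : ℤ) : ℝ) * L = s := by push_cast; ring
    rw [e1] at h3
    exact h3
  ext x
  constructor
  · rintro ⟨s, rfl⟩; exact ⟨ε * s + c, (key s).symm⟩
  · rintro ⟨t, rfl⟩
    refine ⟨ε * (t - c), ?_⟩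
    rw [key]
    congr 1
    linear_combination (t - c) * hε

/-- Overlap of distinct axes is shorter than the translation length.  `g` and `h` are
isometries of a (CAT(0)) metric space `X`, translating by length `L > 0` along their
respective axes `A = range γA` and `B = range γB` (geodesic lines, i.e. isometrically
embedded copies of ℝ).  If `A ≠ B`, the overlap `A ∩ B` is the geodesic segment
`γA '' [s₀, s₁]`, and the group generated by `g` and `h` acts freely on `X`, then the
length `s₁ − s₀` of the overlap is strictly less than `L`. -/
theorem axis_overlap_lt_translation_length (X : Type*) [MetricSpace X]
    (g h : X ≃ᵢ X) (L : ℝ) (hL : 0 < L)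
    (γA γB : ℝ → X) (hγA : Isometry γA) (hγB : Isometry γB)
    (hgA : ∀ t, g (γA t) = γA (t + L)) (hhB : ∀ t, h (γB t) = γB (t + L))
    (hAB : Set.range γA ≠ Set.range γB)
    (s₀ s₁ : ℝ) (hs : s₀ ≤ s₁)
    (hover : Set.range γA ∩ Set.range γB = γA '' Set.Icc s₀ s₁)
    (hfree : ∀ w ∈ Subgroup.closure ({g, h} : Set (X ≃ᵢ X)), w ≠ 1 → ∀ x : X, w x ≠ x) :
    s₁ - s₀ < L := by
  by_contra hlt
  push_neg at hlt
  -- hlt : L ≤ s₁ - s₀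
  have hs01 : s₀ < s₁ := by linarith
  -- every point of the overlap is on B; choose a parameter on B for it
  have hmem : ∀ s : ℝ, ∃ u, s ∈ Set.Icc s₀ s₁ → γB u = γA s := by
    intro s
    by_cases hsI : s ∈ Set.Icc s₀ s₁
    · have hx : γA s ∈ Set.range γA ∩ Set.range γB := by
        rw [hover]; exact ⟨s, hsI, rfl⟩
      obtain ⟨u, hu⟩ := hx.2
      exact ⟨u, fun _ => hu⟩
    · exact ⟨0, fun hc => absurd hc hsI⟩
  choose ψ hψ using hmem
  have hdist : ∀ s ∈ Set.Icc s₀ s₁, ∀ t ∈ Set.Icc s₀ s₁, |ψ s - ψ t| = |s - t| := by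
    intro s hs' t ht'
    have hd := hγB.dist_eq (ψ s) (ψ t)
    rw [hψ s hs', hψ t ht'] at hd
    rw [← Real.dist_eq, ← hd, hγA.dist_eq, Real.dist_eq]
  have hmem₀ : s₀ ∈ Set.Icc s₀ s₁ := ⟨le_rfl, hs⟩
  have hmem₁ : s₁ ∈ Set.Icc s₀ s₁ := ⟨hs, le_rfl⟩
  have h10 : |ψ s₁ - ψ s₀| = s₁ - s₀ := by
    rw [hdist s₁ hmem₁ s₀ hmem₀, abs_of_nonneg (by linarith)]
  -- closure facts
  have hgC : g ∈ Subgroup.closure ({g, h} : Set (X ≃ᵢ X)) :=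
    Subgroup.subset_closure (by simp)
  have hhC : h ∈ Subgroup.closure ({g, h} : Set (X ≃ᵢ X)) :=
    Subgroup.subset_closure (by simp)
  have hmemL : s₀ + L ∈ Set.Icc s₀ s₁ := ⟨by linarith, by linarith⟩
  rcases (abs_eq (by linarith : (0:ℝ) ≤ s₁ - s₀)).mp h10 with hcase | hcase
  · -- ε = 1 : ψ s = s + c on the overlap
    set c : ℝ := ψ s₀ - s₀ with hc
    have hrel : ∀ s ∈ Set.Icc s₀ s₁, γA s = γB (1 * s + c) := by
      intro s hs'
      have ha : |ψ s - ψ s₀| = s - s₀ := by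
        rw [hdist s hs' s₀ hmem₀, abs_of_nonneg (by linarith [hs'.1])]
      have hb : |ψ s₁ - ψ s| = s₁ - s := by
        rw [hdist s₁ hmem₁ s hs', abs_of_nonneg (by linarith [hs'.2])]
      have ha' : ψ s - ψ s₀ ≤ s - s₀ := ha ▸ le_abs_self _
      have hb' : ψ s₁ - ψ s ≤ s₁ - s := hb ▸ le_abs_self _
      have hψs : ψ s = 1 * s + c := by rw [hc]; linarith
      rw [← hψs]
      exact (hψ s hs').symm
    by_cases hgh : g = h
    · -- then the axes coincide: contradiction
      apply hAB
      refine axis_ext g L 1 c s₀ s₁ hL (by linarith) (by norm_num) γA γB hgA ?_ hrel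
      intro t
      rw [hgh, hhB t, one_mul]
    · -- h⁻¹ * g fixes γA s₀
      have hv1 : g (γA s₀) = γB (s₀ + L + c) := by
        rw [hgA s₀, hrel _ hmemL]; ring_nf
      have hv2 : h (γA s₀) = γB (s₀ + L + c) := by
        rw [hrel s₀ hmem₀, one_mul, hhB (s₀ + c)]; ring_nf
      have hw : (h⁻¹ * g) (γA s₀) = γA s₀ := by
        rw [IsometryEquiv.mul_apply, hv1, ← hv2, IsometryEquiv.inv_apply_self]
      have hne : (h⁻¹ * g) ≠ 1 := by
        intro hone
        exact hgh (inv_mul_eq_one.mp hone).symm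
      exact hfree _ (Subgroup.mul_mem _ (Subgroup.inv_mem _ hhC) hgC) hne (γA s₀) hw
  · -- ε = -1 : ψ s = -s + c on the overlap
    set c : ℝ := ψ s₀ + s₀ with hc
    have hrel : ∀ s ∈ Set.Icc s₀ s₁, γA s = γB ((-1) * s + c) := by
      intro s hs'
      have ha : |ψ s - ψ s₀| = s - s₀ := by
        rw [hdist s hs' s₀ hmem₀, abs_of_nonneg (by linarith [hs'.1])]
      have hb : |ψ s₁ - ψ s| = s₁ - s := by
        rw [hdist s₁ hmem₁ s hs', abs_of_nonneg (by linarith [hs'.2])]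
      have ha' : -(ψ s - ψ s₀) ≤ s - s₀ := ha ▸ neg_le_abs _
      have hb' : -(ψ s₁ - ψ s) ≤ s₁ - s := hb ▸ neg_le_abs _
      have hψs : ψ s = (-1) * s + c := by rw [hc]; linarith
      rw [← hψs]
      exact (hψ s hs').symm
    by_cases hgh : h * g = 1
    · -- then g translates B backwards: axes coincide, contradiction
      apply hAB
      refine axis_ext g L (-1) c s₀ s₁ hL (by linarith) (by norm_num) γA γB hgA ?_ hrel
      intro t
      have hg' : g = h⁻¹ := eq_inv_of_mul_eq_one_right hgh
      rw [hg']
      apply h.injective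
      rw [IsometryEquiv.apply_inv_self, hhB]
      congr 1; ring
    · -- h * g fixes γA s₀
      have hv1 : g (γA s₀) = γB (-s₀ - L + c) := by
        rw [hgA s₀, hrel _ hmemL]; ring_nf
      have hw : (h * g) (γA s₀) = γA s₀ := by
        rw [IsometryEquiv.mul_apply, hv1, hhB, hrel s₀ hmem₀]
        congr 1; ring
      exact hfree _ (Subgroup.mul_mem _ hhC hgC) hgh (γA s₀) hw
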